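/- Let $X_n$ satisfy $X_{n+1} - X_n \leq \frac{f(X_n)}{n^{\gamma}} + \frac{Y_{n+1}}{n^{\gamma}}$, where $|Y_n| \leq M$ a.s., $E(Y_{n+1}\mid\mathscr{F}_n)=0$, $f(x) \leq |x|^k$ on $(-\epsilon,\epsilon)$ and $f(x) = |x|^k$ off $(-\epsilon,\epsilon)$, and let $x_0 < 0$ be such that $f(x) > M$ for all $x \leq x_0$. Set $C = \max(M, |X_1|, |x_0|)$. Then almost surely $X_n > -2C$ for all $n$. -/

import Mathlib

open MeasureTheory ProbabilityTheory Filter Real Set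

/-- a.s. lower bound `X_n > -2C` with `C = max(M, |X₁|, |x₀|)`, for the
recursion `X_{n+1} = X_n + f(X_n)/n^γ + Y_{n+1}/n^γ` with `0 ≤ f(x) ≤ |x|^k` on `(-ε,ε)`,
`f(x) = |x|^k` off `(-ε,ε)`, and `f > M` on `(-∞, x₀]`. -/
theorem stmt_18 {Ω : Type*} {m : MeasurableSpace Ω} (P : Measure Ω) [IsProbabilityMeasure P]
    (𝒢 : Filtration ℕ m) (X Y : ℕ → Ω → ℝ) (f : ℝ → ℝ) (γ k M ε x₀ x₁ : ℝ)
    (hγ : γ ∈ Ioo (1/2 : ℝ) 1) (hk : 1 < k) (hε : 0 < ε)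
    (hYb : ∀ n, ∀ᵐ ω ∂P, |Y n ω| ≤ M)
    (hYmart : ∀ n, P[Y (n+1) | 𝒢 n] =ᵐ[P] 0)
    (hf_nonneg : ∀ x, 0 ≤ f x)
    (hf_le : ∀ x ∈ Ioo (-ε) ε, f x ≤ |x| ^ k)
    (hf_eq : ∀ x ∉ Ioo (-ε) ε, f x = |x| ^ k)
    (hx₀ : x₀ < 0) (hfx₀ : ∀ x ≤ x₀, M < f x)
    (hinit : ∀ ω, X 1 ω = x₁)
    (hrec : ∀ᵐ ω ∂P, ∀ n, 1 ≤ n →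
      X (n+1) ω = X n ω + f (X n ω) / (n:ℝ) ^ γ + Y (n+1) ω / (n:ℝ) ^ γ) :
    ∀ᵐ ω ∂P, ∀ n, 1 ≤ n → -(2 * max M (max |x₁| |x₀|)) < X n ω := by
  have hγ0 : (0:ℝ) ≤ γ := le_of_lt (lt_trans (by norm_num) hγ.1)
  filter_upwards [hrec, ae_all_iff.2 hYb] with ω hrecω hYω
  set C := max M (max |x₁| |x₀|) with hC
  have hMC : M ≤ C := le_max_left _ _
  have hx₁C : |x₁| ≤ C := le_trans (le_max_left _ _) (le_max_right _ _)
  have hx₀C : |x₀| ≤ C := le_trans (le_max_right _ _) (le_max_right _ _)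
  have hM0 : 0 ≤ M := le_trans (abs_nonneg _) (hYω 0)
  have hC0 : 0 < C := lt_of_lt_of_le (abs_pos.2 (ne_of_lt hx₀)) hx₀C
  intro n hn
  induction n, hn using Nat.le_induction with
  | base =>
    rw [hinit]
    have h1 : -C ≤ x₁ := neg_le_of_abs_le hx₁C
    linarith
  | succ n hn ih =>
    have hpow : (1:ℝ) ≤ (n:ℝ) ^ γ :=
      Real.one_le_rpow (by exact_mod_cast hn) hγ0
    have hpow0 : (0:ℝ) < (n:ℝ) ^ γ := lt_of_lt_of_le one_pos hpow
    have hY1 : -M ≤ Y (n+1) ω := neg_le_of_abs_le (hYω (n+1))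
    have hrecn := hrecω n hn
    by_cases hcase : X n ω ≤ x₀
    · have hfM : M < f (X n ω) := hfx₀ _ hcase
      have hpos : 0 < (f (X n ω) + Y (n+1) ω) / (n:ℝ) ^ γ :=
        div_pos (by linarith) hpow0
      have hsum : f (X n ω) / (n:ℝ) ^ γ + Y (n+1) ω / (n:ℝ) ^ γ
          = (f (X n ω) + Y (n+1) ω) / (n:ℝ) ^ γ := (add_div _ _ _).symm
      rw [hrecn]
      linarith
    · push_neg at hcase
      have hx₀ge : -C ≤ x₀ := neg_le_of_abs_le hx₀C
      have h1 : -C < X n ω := lt_of_le_of_lt hx₀ge hcase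
      have hdiv : M / (n:ℝ) ^ γ ≤ M := div_le_self hM0 hpow
      have h2 : (-M) / (n:ℝ) ^ γ ≤ Y (n+1) ω / (n:ℝ) ^ γ :=
        (div_le_div_iff_of_pos_right hpow0).mpr hY1
      have hneg : (-M) / (n:ℝ) ^ γ = -(M / (n:ℝ) ^ γ) := neg_div _ _
      have hfd : 0 ≤ f (X n ω) / (n:ℝ) ^ γ :=
        div_nonneg (hf_nonneg _) hpow0.le
      rw [hrecn]
      linarith
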